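/- Let B = (b_{ij}) be a constant real skew-symmetric 3×3 matrix (b₂₁ = −b₁₂, b₃₁ = −b₁₃, b₃₂ = −b₂₃) with b₁₂ b₁₃ b₂₃ ≠ 0, and let g : ℝ → ℝ be differentiable. Define the symmetric traceless matrix A(t) by a₁₁ = g(t)(b₁₂² + b₁₃² − 2b₂₃²)/(3 b₁₂ b₁₃ b₂₃), a₂₂ = g(t)(b₁₂² − 2b₁₃² + b₂₃²)/(3 b₁₂ b₁₃ b₂₃), a₃₃ = −a₁₁ − a₂₂, a₁₂ = a₂₁ = g(t)/b₁₂, a₁₃ = a₃₁ = −g(t)/b₁₃, a₂₃ = a₃₂ = g(t)/b₂₃. Then v(t,x) = A(t)x, H(t,x) = Bx and p(t,x) = −(ρ/2)⟨x, (A′(t)+A(t)²)x⟩ + ρ μ₀ |Bx|² solve the MHD equations on ℝ × ℝ³. (Proposition 2.2.) -/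

import Mathlib

open Real Matrix

/-- Partial derivative in the `i`-th spatial coordinate. -/
noncomputable def pd (i : Fin 3) (f : (Fin 3 → ℝ) → ℝ) (x : Fin 3 → ℝ) : ℝ :=
  deriv (fun s => f (Function.update x i s)) (x i)

/-- Divergence of a vector field on `ℝ³`. -/
noncomputable def vdiv (F : (Fin 3 → ℝ) → (Fin 3 → ℝ)) (x : Fin 3 → ℝ) : ℝ :=
  ∑ i, pd i (fun y => F y i) x

/-- Curl of a vector field on `ℝ³`. -/
noncomputable def vcurl (F : (Fin 3 → ℝ) → (Fin 3 → ℝ)) (x : Fin 3 → ℝ) : Fin 3 → ℝ :=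
  ![pd 1 (fun y => F y 2) x - pd 2 (fun y => F y 1) x,
    pd 2 (fun y => F y 0) x - pd 0 (fun y => F y 2) x,
    pd 0 (fun y => F y 1) x - pd 1 (fun y => F y 0) x]

/-- Laplacian of a scalar field on `ℝ³`. -/
noncomputable def slap (f : (Fin 3 → ℝ) → ℝ) (x : Fin 3 → ℝ) : ℝ :=
  ∑ i, pd i (fun y => pd i f y) x

/-- Cross product on `ℝ³`. -/
def cross3 (u v : Fin 3 → ℝ) : Fin 3 → ℝ :=
  ![u 1 * v 2 - u 2 * v 1, u 2 * v 0 - u 0 * v 2, u 0 * v 1 - u 1 * v 0]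

/-- The incompressible viscous MHD equations with finite electrical conductivity:
(M1) `∇·v = 0`, (M2) momentum, (M3) `∇·H = 0`, (M4) induction. -/
def MHD (ρ ν μ₀ η : ℝ) (v H : ℝ → (Fin 3 → ℝ) → (Fin 3 → ℝ))
    (p : ℝ → (Fin 3 → ℝ) → ℝ) : Prop :=
  ∀ (t : ℝ) (x : Fin 3 → ℝ),
    vdiv (v t) x = 0 ∧
    (∀ i, deriv (fun s => v s x i) t
        + (∑ j, v t x j * pd j (fun y => v t y i) x)
        - μ₀ * cross3 (H t x) (vcurl (H t) x) i
        + (1 / ρ) * pd i (p t) x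
        = ν * slap (fun y => v t y i) x) ∧
    vdiv (H t) x = 0 ∧
    (∀ i, deriv (fun s => H s x i) t
        = vcurl (fun y => cross3 (v t y) (H t y)) x i
          + η * slap (fun y => H t y i) x)

lemma deriv_eq_affine {f : ℝ → ℝ} {a c t : ℝ} (h : ∀ s, f s = a * s + c) :
    deriv f t = a := by
  have hf : f = fun s => a * s + c := funext h
  rw [hf]
  simpa using (((hasDerivAt_id t).const_mul a).add_const c).deriv

lemma deriv_eq_quad {f : ℝ → ℝ} {a b c t : ℝ} (h : ∀ s, f s = a * s ^ 2 + b * s + c) :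
    deriv f t = 2 * a * t + b := by
  have hf : f = fun s => a * s ^ 2 + b * s + c := funext h
  rw [hf]
  have h1 := ((hasDerivAt_pow 2 t).const_mul a).add
    (((hasDerivAt_id t).const_mul b).add_const c)
  have h2 : HasDerivAt (fun s : ℝ => a * s ^ 2 + b * s + c) (2 * a * t + b) t := by
    have e : (fun s : ℝ => a * s ^ 2 + b * s + c) = (fun y => a * y ^ 2) + fun x => b * id x + c := by
      funext s; simp only [Pi.add_apply, id]; ring
    rw [e]
    exact h1.congr_deriv (by norm_num <;> ring)
  exact h2.deriv

lemma pd_mulVec (A : Matrix (Fin 3) (Fin 3) ℝ) (i j : Fin 3) (x : Fin 3 → ℝ) :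
    pd j (fun y => A.mulVec y i) x = A i j := by
  unfold pd
  fin_cases j
  · exact deriv_eq_affine (c := A i 1 * x 1 + A i 2 * x 2) fun s => by
      simp [Matrix.mulVec, dotProduct, Fin.sum_univ_three, Function.update]; ring
  · exact deriv_eq_affine (c := A i 0 * x 0 + A i 2 * x 2) fun s => by
      simp [Matrix.mulVec, dotProduct, Fin.sum_univ_three, Function.update]; ring
  · exact deriv_eq_affine (c := A i 0 * x 0 + A i 1 * x 1) fun s => by
      simp [Matrix.mulVec, dotProduct, Fin.sum_univ_three, Function.update]; ring

lemma pd_const (c : ℝ) (i : Fin 3) (x : Fin 3 → ℝ) : pd i (fun _ => c) x = 0 := by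
  simp [pd]

lemma slap_mulVec (A : Matrix (Fin 3) (Fin 3) ℝ) (i : Fin 3) (x : Fin 3 → ℝ) :
    slap (fun y => A.mulVec y i) x = 0 := by
  unfold slap
  have h : ∀ (j : Fin 3) (y : Fin 3 → ℝ), pd j (fun z => A.mulVec z i) y = A i j :=
    fun j y => pd_mulVec A i j y
  simp_rw [h, pd_const]
  simp

lemma pd_quad (Q : Matrix (Fin 3) (Fin 3) ℝ) (i : Fin 3) (x : Fin 3 → ℝ) :
    pd i (fun y => y ⬝ᵥ Q.mulVec y) x = ((Q + Qᵀ).mulVec x) i := by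
  unfold pd
  fin_cases i
  · refine (deriv_eq_quad (a := Q 0 0) (b := (Q 0 1 + Q 1 0) * x 1 + (Q 0 2 + Q 2 0) * x 2)
        (c := Q 1 1 * x 1 * x 1 + (Q 1 2 + Q 2 1) * x 1 * x 2 + Q 2 2 * x 2 * x 2) fun s => ?_).trans ?_
    · simp [dotProduct, Matrix.mulVec, Fin.sum_univ_three, Function.update]; ring
    · simp [Matrix.mulVec, dotProduct, Fin.sum_univ_three, Matrix.add_apply,
        Matrix.transpose_apply]
      ring
  · refine (deriv_eq_quad (a := Q 1 1) (b := (Q 0 1 + Q 1 0) * x 0 + (Q 1 2 + Q 2 1) * x 2)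
        (c := Q 0 0 * x 0 * x 0 + (Q 0 2 + Q 2 0) * x 0 * x 2 + Q 2 2 * x 2 * x 2) fun s => ?_).trans ?_
    · simp [dotProduct, Matrix.mulVec, Fin.sum_univ_three, Function.update]; ring
    · simp [Matrix.mulVec, dotProduct, Fin.sum_univ_three, Matrix.add_apply,
        Matrix.transpose_apply]
      ring
  · refine (deriv_eq_quad (a := Q 2 2) (b := (Q 0 2 + Q 2 0) * x 0 + (Q 1 2 + Q 2 1) * x 1)
        (c := Q 0 0 * x 0 * x 0 + (Q 0 1 + Q 1 0) * x 0 * x 1 + Q 1 1 * x 1 * x 1) fun s => ?_).trans ?_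
    · simp [dotProduct, Matrix.mulVec, Fin.sum_univ_three, Function.update]; ring
    · simp [Matrix.mulVec, dotProduct, Fin.sum_univ_three, Matrix.add_apply,
        Matrix.transpose_apply]
      ring

lemma quad_comb (α β : ℝ) (Q R : Matrix (Fin 3) (Fin 3) ℝ) (y : Fin 3 → ℝ) :
    α * (y ⬝ᵥ Q.mulVec y) + β * (R.mulVec y ⬝ᵥ R.mulVec y)
      = y ⬝ᵥ (α • Q + β • (Rᵀ * R)).mulVec y := by
  simp [dotProduct, Matrix.mulVec, Fin.sum_univ_three, Matrix.mul_apply,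
    Matrix.transpose_apply, Matrix.add_apply, Matrix.smul_apply]
  ring

lemma pd_crossterm (A C : Matrix (Fin 3) (Fin 3) ℝ) (j k l : Fin 3) (x : Fin 3 → ℝ) :
    pd j (fun y => A.mulVec y k * C.mulVec y l - A.mulVec y l * C.mulVec y k) x
      = A k j * C.mulVec x l + A.mulVec x k * C l j
        - (A l j * C.mulVec x k + A.mulVec x l * C k j) := by
  unfold pd
  fin_cases j
  · refine (deriv_eq_quad (a := A k 0 * C l 0 - A l 0 * C k 0)
        (b := A k 0 * (C l 1 * x 1 + C l 2 * x 2) + C l 0 * (A k 1 * x 1 + A k 2 * x 2)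
          - A l 0 * (C k 1 * x 1 + C k 2 * x 2) - C k 0 * (A l 1 * x 1 + A l 2 * x 2))
        (c := (A k 1 * x 1 + A k 2 * x 2) * (C l 1 * x 1 + C l 2 * x 2)
          - (A l 1 * x 1 + A l 2 * x 2) * (C k 1 * x 1 + C k 2 * x 2)) fun s => ?_).trans ?_
    · simp [Matrix.mulVec, dotProduct, Fin.sum_univ_three, Function.update]; ring
    · simp [Matrix.mulVec, dotProduct, Fin.sum_univ_three]; ring
  · refine (deriv_eq_quad (a := A k 1 * C l 1 - A l 1 * C k 1)
        (b := A k 1 * (C l 0 * x 0 + C l 2 * x 2) + C l 1 * (A k 0 * x 0 + A k 2 * x 2)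
          - A l 1 * (C k 0 * x 0 + C k 2 * x 2) - C k 1 * (A l 0 * x 0 + A l 2 * x 2))
        (c := (A k 0 * x 0 + A k 2 * x 2) * (C l 0 * x 0 + C l 2 * x 2)
          - (A l 0 * x 0 + A l 2 * x 2) * (C k 0 * x 0 + C k 2 * x 2)) fun s => ?_).trans ?_
    · simp [Matrix.mulVec, dotProduct, Fin.sum_univ_three, Function.update]; ring
    · simp [Matrix.mulVec, dotProduct, Fin.sum_univ_three]; ring
  · refine (deriv_eq_quad (a := A k 2 * C l 2 - A l 2 * C k 2)
        (b := A k 2 * (C l 0 * x 0 + C l 1 * x 1) + C l 2 * (A k 0 * x 0 + A k 1 * x 1)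
          - A l 2 * (C k 0 * x 0 + C k 1 * x 1) - C k 2 * (A l 0 * x 0 + A l 1 * x 1))
        (c := (A k 0 * x 0 + A k 1 * x 1) * (C l 0 * x 0 + C l 1 * x 1)
          - (A l 0 * x 0 + A l 1 * x 1) * (C k 0 * x 0 + C k 1 * x 1)) fun s => ?_).trans ?_
    · simp [Matrix.mulVec, dotProduct, Fin.sum_univ_three, Function.update]; ring
    · simp [Matrix.mulVec, dotProduct, Fin.sum_univ_three]; ring

set_option maxHeartbeats 1000000 in
/-- Proposition 2.2: linear solutions with skew-symmetric constant `B` and symmetric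
traceless `A(t) = g(t) • M`. -/
theorem stmt_1 (ρ ν μ₀ η : ℝ) (hρ : 0 < ρ) (b12 b13 b23 : ℝ)
    (hb : b12 * b13 * b23 ≠ 0)
    (g g' : ℝ → ℝ) (hg : ∀ t, HasDerivAt g (g' t) t) :
    let B : Matrix (Fin 3) (Fin 3) ℝ := !![0, b12, b13; -b12, 0, b23; -b13, -b23, 0]
    let M : Matrix (Fin 3) (Fin 3) ℝ :=
      !![(b12 ^ 2 + b13 ^ 2 - 2 * b23 ^ 2) / (3 * b12 * b13 * b23), 1 / b12, -(1 / b13);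
         1 / b12, (b12 ^ 2 - 2 * b13 ^ 2 + b23 ^ 2) / (3 * b12 * b13 * b23), 1 / b23;
         -(1 / b13), 1 / b23,
           -((b12 ^ 2 + b13 ^ 2 - 2 * b23 ^ 2) / (3 * b12 * b13 * b23))
             - (b12 ^ 2 - 2 * b13 ^ 2 + b23 ^ 2) / (3 * b12 * b13 * b23)]
    MHD ρ ν μ₀ η (fun t x => (g t • M).mulVec x) (fun _ x => B.mulVec x)
      (fun t x => -(ρ / 2) * (x ⬝ᵥ (g' t • M + (g t • M) * (g t • M)).mulVec x)
        + ρ * μ₀ * (B.mulVec x ⬝ᵥ B.mulVec x)) := by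
  intro B M
  have h12 : b12 ≠ 0 := left_ne_zero_of_mul (left_ne_zero_of_mul hb)
  have h13 : b13 ≠ 0 := right_ne_zero_of_mul (left_ne_zero_of_mul hb)
  have h23 : b23 ≠ 0 := right_ne_zero_of_mul hb
  unfold MHD
  intro t x
  refine ⟨?_, ?_, ?_, ?_⟩
  · -- M1
    simp only [vdiv, pd_mulVec, Fin.sum_univ_three]
    simp [M, Matrix.smul_apply]
    field_simp
    ring
  · -- M2
    intro i
    have hdv : deriv (fun s => ((g s • M) *ᵥ x) i) t = g' t * (M *ᵥ x) i := by
      have hfun : (fun s => ((g s • M) *ᵥ x) i) = fun s => g s * (M *ᵥ x) i := by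
        funext s; simp [Matrix.smul_mulVec]
      rw [hfun]; exact ((hg t).mul_const _).deriv
    have hMsym : Mᵀ = M := by
      ext a b; fin_cases a <;> fin_cases b <;> simp [M]
    have hp3 : pd i (fun y => -(ρ / 2) * (y ⬝ᵥ (g' t • M + (g t • M) * (g t • M)).mulVec y)
          + ρ * μ₀ * (B.mulVec y ⬝ᵥ B.mulVec y)) x
        = (((-ρ) • (g' t • M + (g t • M) * (g t • M)) + (2 * (ρ * μ₀)) • (Bᵀ * B)) *ᵥ x) i := by
      rw [show (fun y : Fin 3 → ℝ =>
            -(ρ / 2) * (y ⬝ᵥ (g' t • M + (g t • M) * (g t • M)).mulVec y)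
              + ρ * μ₀ * (B.mulVec y ⬝ᵥ B.mulVec y))
          = fun y => y ⬝ᵥ ((-(ρ / 2)) • (g' t • M + (g t • M) * (g t • M))
              + (ρ * μ₀) • (Bᵀ * B)).mulVec y
          from funext fun y => quad_comb _ _ _ _ y]
      rw [pd_quad]
      have hS : ((-(ρ / 2)) • (g' t • M + (g t • M) * (g t • M)) + (ρ * μ₀) • (Bᵀ * B))
            + ((-(ρ / 2)) • (g' t • M + (g t • M) * (g t • M)) + (ρ * μ₀) • (Bᵀ * B))ᵀ
          = (-ρ) • (g' t • M + (g t • M) * (g t • M)) + (2 * (ρ * μ₀)) • (Bᵀ * B) := by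
        simp only [Matrix.transpose_add, Matrix.transpose_smul, Matrix.transpose_mul,
          Matrix.transpose_transpose, hMsym]
        module
      rw [hS]
    have hsum : (∑ j, ((g t • M) *ᵥ x) j * (g t • M) i j)
        = ((g t • M) *ᵥ ((g t • M) *ᵥ x)) i := by
      simp [Matrix.mulVec, dotProduct, Fin.sum_univ_three]
      ring
    have hρ' : ρ ≠ 0 := ne_of_gt hρ
    simp only [pd_mulVec, slap_mulVec, vcurl]
    rw [hdv, hp3, hsum]
    simp only [Matrix.add_mulVec, Matrix.smul_mulVec, ← Matrix.mulVec_mulVec,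
      Pi.add_apply, Pi.smul_apply, smul_eq_mul]
    fin_cases i <;>
      · simp [cross3, B, Matrix.mul_apply, Matrix.mulVec, dotProduct,
          Fin.sum_univ_three, Matrix.transpose_apply, Matrix.smul_apply]
        field_simp
        ring
  · -- M3
    simp only [vdiv, pd_mulVec, Fin.sum_univ_three]
    simp [B]
  · -- M4
    intro i
    have hcross : ∀ (k l : Fin 3) (j : Fin 3),
        pd j (fun y => ((g t • M) *ᵥ y) k * (B *ᵥ y) l - ((g t • M) *ᵥ y) l * (B *ᵥ y) k) x
          = (g t • M) k j * (B *ᵥ x) l + ((g t • M) *ᵥ x) k * B l j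
            - ((g t • M) l j * (B *ᵥ x) k + ((g t • M) *ᵥ x) l * B k j) :=
      fun k l j => pd_crossterm (g t • M) B j k l x
    simp only [slap_mulVec, vcurl, cross3]
    fin_cases i <;>
      · simp only [Matrix.cons_val_zero, Matrix.cons_val_one, Matrix.head_cons,
          Matrix.cons_val_two, Matrix.tail_cons, Fin.isValue]
        simp only [hcross]
        simp only [deriv_const]
        simp [B, M, Matrix.mulVec, dotProduct, Fin.sum_univ_three, Matrix.smul_apply]
        field_simp
        ring
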